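/- Let K₁ and K₂ be ordered simplicial complexes (viewed as regular path complexes) and let f : V(K₁) → V(K₂) be a weak simplicial morphism. Then f is a weak path morphism K₁ → K₂ if and only if f is a triangle-collapsing simplicial morphism. -/

import Mathlib

/-- An elementary path is a nonempty finite sequence of vertices;
it is regular if no two consecutive vertices are equal. -/
def IsRegularPath {V : Type*} (p : List V) : Prop := p.Chain' (· ≠ ·)

/-- An ordered simplicial complex on `V`: a set of nonempty lists of pairwise
distinct vertices, containing all singletons and closed under deleting any
single vertex from a path (with at least two vertices). -/
structure IsOSC {V : Type*} (K : Set (List V)) : Prop where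
  ne_nil : ∀ p ∈ K, p ≠ []
  nodup : ∀ p ∈ K, p.Nodup
  singleton_mem : ∀ v : V, [v] ∈ K
  eraseIdx_mem : ∀ p ∈ K, 2 ≤ p.length → ∀ i < p.length, p.eraseIdx i ∈ K

/-- A vertex map is a weak path morphism if the image of every path is
irregular or belongs to the codomain path complex. -/
def IsWeakPathMorphism {V W : Type*} (P₁ : Set (List V)) (P₂ : Set (List W))
    (f : V → W) : Prop :=
  ∀ p ∈ P₁, ¬ IsRegularPath (p.map f) ∨ p.map f ∈ P₂

/-- A vertex map is a weak simplicial morphism if the image of every simplex is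
non-simplicial or belongs to the codomain complex. -/
def IsWeakSimplicialMorphism {V W : Type*} (K₁ : Set (List V)) (K₂ : Set (List W))
    (f : V → W) : Prop :=
  ∀ p ∈ K₁, ¬ (p.map f).Nodup ∨ p.map f ∈ K₂

/-- A triangle-collapsing simplicial morphism. -/
def IsTriangleCollapsing {V W : Type*} (K₁ : Set (List V)) (K₂ : Set (List W))
    (f : V → W) : Prop :=
  IsWeakSimplicialMorphism K₁ K₂ f ∧
  ∀ v₀ v₁ v₂ : V, [v₀, v₁, v₂] ∈ K₁ → f v₀ = f v₂ → f v₀ = f v₁ ∧ f v₁ = f v₂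


private lemma sublist_eraseIdx_of_ne {V : Type*} {q p : List V} (h : List.Sublist q p) (hne : q ≠ p) :
    ∃ i < p.length, List.Sublist q (p.eraseIdx i) := by
  induction h with
  | slnil => exact absurd rfl hne
  | @cons l₁ l₂ a h ih =>
      exact ⟨0, by simp, by simpa using h⟩
  | @cons_cons l₁ l₂ a h ih =>
      have hne' : l₁ ≠ l₂ := fun e => hne (by rw [e])
      obtain ⟨i, hi, hsub⟩ := ih hne'
      exact ⟨i + 1, by simpa using hi, by simpa using hsub.cons₂ a⟩

private lemma IsOSC.sublist_mem {V : Type*} {K : Set (List V)} (hK : IsOSC K) :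
    ∀ p ∈ K, ∀ q, List.Sublist q p → q ≠ [] → q ∈ K := by
  suffices h : ∀ n p, p.length = n → p ∈ K → ∀ q, List.Sublist q p → q ≠ [] → q ∈ K by
    intro p hp q hsub hq; exact h p.length p rfl hp q hsub hq
  intro n
  induction n using Nat.strong_induction_on with
  | _ n ih =>
    intro p hn hp q hsub hq
    rcases eq_or_ne q p with rfl | hne
    · exact hp
    obtain ⟨i, hi, hsub'⟩ := sublist_eraseIdx_of_ne hsub hne
    have hlen2 : 2 ≤ p.length := by
      rcases p with _ | ⟨a, _ | ⟨b, t⟩⟩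
      · exact absurd rfl (hK.ne_nil _ hp)
      · rcases List.sublist_singleton.mp hsub with rfl | rfl
        · exact absurd rfl hq
        · exact absurd rfl hne
      · simp [Nat.le_add_left]
    have hmem := hK.eraseIdx_mem p hp hlen2 i hi
    have hlt : (p.eraseIdx i).length < n := by
      rw [← hn]
      have := List.length_eraseIdx (l := p) (i := i)
      simp [hi] at this
      omega
    exact ih _ hlt _ rfl hmem q hsub' hq

private lemma nodup_map_of_chain {V W : Type*} {K₁ : Set (List V)}
    {f : V → W} (hK₁ : IsOSC K₁)
    (htc : ∀ v₀ v₁ v₂ : V, [v₀, v₁, v₂] ∈ K₁ → f v₀ = f v₂ → f v₀ = f v₁ ∧ f v₁ = f v₂) :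
    ∀ p, p ∈ K₁ → (p.map f).Chain' (· ≠ ·) → (p.map f).Nodup := by
  intro p
  induction p with
  | nil => simp
  | cons v rest ih =>
    intro hp hch
    rcases rest with _ | ⟨r0, rt⟩
    · simp
    have hrest : (r0 :: rt) ∈ K₁ :=
      hK₁.sublist_mem _ hp _ (List.sublist_cons_self v _) (by simp)
    simp only [List.Chain', List.map_cons, List.isChain_cons_cons] at hch ⊢
    obtain ⟨hhd, hch'⟩ := hch
    have hnd := ih hrest (by simpa [List.Chain', List.map_cons] using hch')
    simp only [List.map_cons] at hnd
    refine List.nodup_cons.mpr ⟨?_, hnd⟩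
    intro hmem
    simp only [List.mem_cons, List.mem_map] at hmem
    rcases hmem with h0 | ⟨u, hu, hfu⟩
    · exact hhd h0
    · have htrip : [v, r0, u] ∈ K₁ := by
        refine hK₁.sublist_mem _ hp _ ?_ (by simp)
        exact (((List.singleton_sublist.mpr hu).cons₂ r0).cons₂ v)
      have := htc v r0 u htrip hfu.symm
      exact hhd this.1

/-- A weak simplicial morphism between ordered simplicial complexes
is a weak path morphism iff it is a triangle-collapsing simplicial morphism. -/
theorem weakPathMorphism_iff_triangleCollapsing {V W : Type*}
    (K₁ : Set (List V)) (K₂ : Set (List W)) (hK₁ : IsOSC K₁) (hK₂ : IsOSC K₂)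
    (f : V → W) (hf : IsWeakSimplicialMorphism K₁ K₂ f) :
    IsWeakPathMorphism K₁ K₂ f ↔ IsTriangleCollapsing K₁ K₂ f := by
  constructor
  · intro hwp
    refine ⟨hf, ?_⟩
    intro v₀ v₁ v₂ hmem heq
    by_cases h01 : f v₀ = f v₁
    · exact ⟨h01, h01 ▸ heq⟩
    · exfalso
      have hreg : IsRegularPath ([v₀, v₁, v₂].map f) := by
        simp only [IsRegularPath, List.Chain', List.map_cons, List.map_nil, List.isChain_cons_cons,
          List.isChain_singleton, and_true]
        exact ⟨h01, fun h => h01 (heq ▸ h.symm)⟩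
      rcases hwp _ hmem with h | h
      · exact h hreg
      · have := hK₂.nodup _ h
        simp only [List.map_cons, List.map_nil, List.nodup_cons, List.mem_cons,
          List.mem_singleton, List.not_mem_nil, or_false] at this
        exact this.1 (Or.inr heq)
  · rintro ⟨-, htc⟩
    intro p hp
    by_cases hreg : IsRegularPath (p.map f)
    · right
      rcases hf p hp with h | h
      · exact absurd (nodup_map_of_chain hK₁ htc p hp hreg) h
      · exact h
    · exact Or.inl hreg
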